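/- The S-cascade function g(x) = (x/2)²/((x/2)² + (1-x)²) is not concave on [0,1]; in particular g is convex near 0, so the induced set function f(S) = g(|S|/d) for d ≥ 4 is not submodular: f({u}) - f(∅) < f({u,v}) - f({v}) for distinct u, v. -/

import Mathlib

theorem scm_not_submodular {α : Type*} [DecidableEq α]
    (g : ℝ → ℝ) (hg : ∀ x : ℝ, g x = (x / 2) ^ 2 / ((x / 2) ^ 2 + (1 - x) ^ 2)) :
    ¬ ConcaveOn ℝ (Set.Icc (0:ℝ) 1) g ∧
    ∀ (d : ℕ), 4 ≤ d →
      ∀ (f : Finset α → ℝ), (∀ S : Finset α, f S = g ((S.card : ℝ) / d)) →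
        ∀ u v : α, u ≠ v → f {u} - f ∅ < f {u, v} - f {v} := by
  constructor
  · intro h
    have h0 : (0:ℝ) ∈ Set.Icc (0:ℝ) 1 := by norm_num
    have h1 : (1/2:ℝ) ∈ Set.Icc (0:ℝ) 1 := by norm_num
    have := h.2 h0 h1 (by norm_num : (0:ℝ) ≤ 1/2) (by norm_num : (0:ℝ) ≤ 1/2) (by norm_num)
    simp only [hg, smul_eq_mul] at this
    norm_num at this
  · intro d hd f hf u v huv
    have hc2 : ({u, v} : Finset α).card = 2 := Finset.card_pair huv
    rw [hf, hf, hf, hf, hg, hg, hg, hg, hc2, Finset.card_singleton, Finset.card_singleton,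
      Finset.card_empty]
    have hd0 : (0:ℝ) < d := by positivity
    have hd4 : (4:ℝ) ≤ d := by exact_mod_cast hd
    set t : ℝ := 1 / d with ht
    have ht0 : 0 < t := by positivity
    have ht4 : t ≤ 1/4 := by
      rw [ht, div_le_div_iff₀ hd0 (by norm_num)]; linarith
    have h2t : (2:ℝ) / d = 2 * t := by rw [ht]; ring
    have h1t : (1:ℝ) / d = t := rfl
    push_cast
    rw [h2t, h1t]
    have hden1 : (t/2)^2 + (1-t)^2 > 0 := by nlinarith
    have hden2 : (2*t/2)^2 + (1-2*t)^2 > 0 := by nlinarith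
    have hz : ((0:ℝ) / (d:ℝ) / 2) ^ 2 / (((0:ℝ) / (d:ℝ) / 2) ^ 2 + (1 - 0 / (d:ℝ)) ^ 2) = 0 := by
      norm_num
    rw [hz, sub_zero, lt_sub_iff_add_lt, ← add_div,
      div_lt_div_iff₀ hden1 hden2]
    have ht2 : t^2 ≤ 1/16 := by nlinarith
    nlinarith [ht2, mul_pos ht0 ht0, sq_nonneg t]
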